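/- Let G be a transitive subgroup of the imprimitive wreath product C_2 ≀ S_n of degree 2n. If G contains a transposition and G surjects onto S_n in the action on the n blocks, then G contains the full base group (C_2)^n, and hence G = C_2 ≀ S_n. -/

import Mathlib

/-- The imprimitive wreath product `C_2 ≀ S_n` of degree `2n`: the subgroup of all permutations
of `Fin n × Fin 2` preserving the partition into the `n` blocks `{i} × Fin 2` of size 2. -/
def blockSubgroup (n : ℕ) : Subgroup (Equiv.Perm (Fin n × Fin 2)) where
  carrier := {g | ∃ τ : Equiv.Perm (Fin n), ∀ p, (g p).1 = τ p.1}
  one_mem' := ⟨1, fun _ => rfl⟩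
  mul_mem' := by
    rintro a b ⟨τa, ha⟩ ⟨τb, hb⟩
    exact ⟨τa * τb, fun p => by simp [Equiv.Perm.mul_apply, ha, hb]⟩
  inv_mem' := by
    rintro g ⟨τ, h⟩
    refine ⟨τ⁻¹, fun p => ?_⟩
    have := h (g⁻¹ p)
    rw [show g (g⁻¹ p) = p from g.apply_symm_apply p] at this
    rw [this, show τ⁻¹ (τ (g⁻¹ p).1) = (g⁻¹ p).1 from τ.symm_apply_apply _]

/-- The base group `(C_2)^n` of the wreath product `C_2 ≀ S_n`: permutations fixing each block. -/
def baseSubgroup (n : ℕ) : Subgroup (Equiv.Perm (Fin n × Fin 2)) where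
  carrier := {g | ∀ p, (g p).1 = p.1}
  one_mem' := fun _ => rfl
  mul_mem' := by
    intro a b ha hb p
    rw [Equiv.Perm.mul_apply, ha, hb]
  inv_mem' := by
    intro g h p
    have := h (g⁻¹ p)
    simpa using this.symm

private lemma fin2_eq_one {x : Fin 2} (h : x ≠ 0) : x = 1 := by fin_cases x <;> simp_all

private lemma swap_eq_block {n : ℕ} {a b : Fin n × Fin 2} (h1 : a.1 = b.1) (hne : a ≠ b) :
    Equiv.swap a b = Equiv.swap (a.1, 0) (a.1, 1) := by
  obtain ⟨i, x⟩ := a; obtain ⟨j, y⟩ := b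
  simp only at h1
  subst h1
  have hxy : x ≠ y := fun h => hne (by rw [h])
  fin_cases x <;> fin_cases y <;> simp_all [Equiv.swap_comm]

/-- A transitive subgroup `G` of the imprimitive wreath product `C_2 ≀ S_n` of degree `2n`
which contains a transposition and surjects onto `S_n` in the action on the `n` blocks
contains the full base group `(C_2)^n`, and hence equals `C_2 ≀ S_n`. -/
theorem wreath_of_swap_and_blocks_surj (n : ℕ) (G : Subgroup (Equiv.Perm (Fin n × Fin 2)))
    (hle : G ≤ blockSubgroup n)
    (htrans : ∀ a b : Fin n × Fin 2, ∃ g ∈ G, g a = b)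
    (hswap : ∃ g ∈ G, Equiv.Perm.IsSwap g)
    (hsurj : ∀ τ : Equiv.Perm (Fin n), ∃ g ∈ G, ∀ p : Fin n × Fin 2, (g p).1 = τ p.1) :
    baseSubgroup n ≤ G ∧ G = blockSubgroup n := by
  obtain ⟨g0, hg0G, a, b, hab, hg0⟩ := hswap
  subst hg0
  obtain ⟨τ0, hτ0⟩ := hle hg0G
  -- the swap must act within a block
  have hblk : a.1 = b.1 := by
    by_contra hne
    have h1 : Equiv.swap a b a = b := Equiv.swap_apply_left a b
    have hadd : ∀ x : Fin 2, x + 1 ≠ x := by decide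
    set a' : Fin n × Fin 2 := (a.1, a.2 + 1) with ha'def
    have ha' : a' ≠ a := fun h => hadd a.2 (congrArg Prod.snd h)
    have ha'b : a' ≠ b := fun h => hne (by rw [← h])
    have hfix : Equiv.swap a b a' = a' := Equiv.swap_apply_of_ne_of_ne ha' ha'b
    have h2 := hτ0 a'
    rw [hfix] at h2
    have h3 := hτ0 a
    rw [h1] at h3
    exact hne (h2.trans h3.symm)
  set i := a.1 with hidef
  have hsG : Equiv.swap ((i : Fin n), (0 : Fin 2)) (i, 1) ∈ G := by
    rw [← swap_eq_block hblk hab]; exact hg0G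
  -- all block swaps are in G
  have hall : ∀ j : Fin n, Equiv.swap ((j : Fin n), (0 : Fin 2)) (j, 1) ∈ G := by
    intro j
    obtain ⟨h, hhG, hh⟩ := hsurj (Equiv.swap i j)
    have hconj : h * Equiv.swap ((i : Fin n), (0 : Fin 2)) (i, 1) * h⁻¹ ∈ G :=
      mul_mem (mul_mem hhG hsG) (inv_mem hhG)
    rw [← Equiv.swap_apply_apply] at hconj
    have e1 : (h ((i : Fin n), (0 : Fin 2))).1 = j := by rw [hh]; simp
    have e2 : (h ((i : Fin n), (1 : Fin 2))).1 = j := by rw [hh]; simp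
    have hne : h ((i : Fin n), (0 : Fin 2)) ≠ h (i, 1) := by
      intro heq
      have := congrArg Prod.snd (h.injective heq)
      simp at this
    rw [swap_eq_block (e1.trans e2.symm) hne, e1] at hconj
    exact hconj
  -- the base group is contained in G
  have hbase : baseSubgroup n ≤ G := by
    intro b hb
    have hb' : ∀ p : Fin n × Fin 2, (b p).1 = p.1 := hb
    clear hb
    suffices H : ∀ k, ∀ b : Equiv.Perm (Fin n × Fin 2), (∀ p, (b p).1 = p.1) →
        (Finset.univ.filter (fun i : Fin n => b (i, 0) ≠ (i, 0))).card = k → b ∈ G by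
      exact H _ b hb' rfl
    intro k
    induction k using Nat.strong_induction_on with
    | _ k ih =>
      intro b hb hcard
      by_cases hzero : (Finset.univ.filter (fun i : Fin n => b (i, 0) ≠ (i, 0))) = ∅
      · have hfix0 : ∀ j : Fin n, b (j, 0) = (j, 0) := by
          intro j
          by_contra hj
          have : j ∈ Finset.univ.filter (fun i : Fin n => b (i, 0) ≠ (i, 0)) := by
            simp [hj]
          rw [hzero] at this
          exact absurd this (Finset.notMem_empty j)
        have : b = 1 := by
          apply Equiv.ext
          intro p
          rw [Equiv.Perm.one_apply]
          obtain ⟨j, x⟩ := p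
          fin_cases x
          · exact hfix0 j
          · have h1 : (b (j, 1)).1 = j := hb (j, 1)
            have h2 : b (j, 1) ≠ (j, 0) := by
              intro h
              have := b.injective (h.trans (hfix0 j).symm)
              have := congrArg Prod.snd this
              simp at this
            have h3 : (b (j, 1)).2 = 1 := by
              apply fin2_eq_one
              intro h
              exact h2 (Prod.ext h1 h)
            exact Prod.ext h1 h3
        rw [this]; exact one_mem G
      · obtain ⟨i0, hi0⟩ := Finset.nonempty_iff_ne_empty.mpr hzero
        have hi0' : b (i0, 0) ≠ (i0, 0) := (Finset.mem_filter.mp hi0).2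
        have hb0 : b (i0, 0) = (i0, 1) := by
          refine Prod.ext (hb (i0, 0)) (fin2_eq_one fun h => ?_)
          exact hi0' (Prod.ext (hb (i0, 0)) h)
        set s := Equiv.swap ((i0 : Fin n), (0 : Fin 2)) (i0, 1) with hsdef
        have hs1 : ∀ q : Fin n × Fin 2, (s q).1 = q.1 := by
          intro q
          rcases eq_or_ne q (i0, 0) with rfl | h0
          · simp [hsdef]
          rcases eq_or_ne q ((i0 : Fin n), (1 : Fin 2)) with rfl | h1
          · simp [hsdef]
          · rw [hsdef, Equiv.swap_apply_of_ne_of_ne h0 h1]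
        have hb'' : ∀ p : Fin n × Fin 2, ((s * b) p).1 = p.1 := fun p =>
          (hs1 (b p)).trans (hb p)
        have hsb0 : (s * b) (i0, 0) = (i0, 0) := by
          rw [Equiv.Perm.mul_apply, hb0, hsdef, Equiv.swap_apply_right]
        have hsub : (Finset.univ.filter (fun j : Fin n => (s * b) (j, 0) ≠ (j, 0))) ⊆
            (Finset.univ.filter (fun j : Fin n => b (j, 0) ≠ (j, 0))).erase i0 := by
          intro j hj
          have hj' : (s * b) (j, 0) ≠ (j, 0) := (Finset.mem_filter.mp hj).2
          have hji : j ≠ i0 := by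
            rintro rfl
            exact hj' hsb0
          refine Finset.mem_erase.mpr ⟨hji, Finset.mem_filter.mpr ⟨Finset.mem_univ j, ?_⟩⟩
          intro hbj
          apply hj'
          rw [Equiv.Perm.mul_apply, hbj, hsdef, Equiv.swap_apply_of_ne_of_ne]
          · intro h
            exact hji (congrArg Prod.fst h)
          · intro h
            exact hji (congrArg Prod.fst h)
        have hlt : (Finset.univ.filter (fun j : Fin n => (s * b) (j, 0) ≠ (j, 0))).card < k := by
          calc (Finset.univ.filter (fun j : Fin n => (s * b) (j, 0) ≠ (j, 0))).card
              ≤ ((Finset.univ.filter (fun j : Fin n => b (j, 0) ≠ (j, 0))).erase i0).card :=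
                Finset.card_le_card hsub
            _ < (Finset.univ.filter (fun j : Fin n => b (j, 0) ≠ (j, 0))).card :=
                Finset.card_erase_lt_of_mem hi0
            _ = k := hcard
        have hsbG : s * b ∈ G := ih _ hlt (s * b) hb'' rfl
        have : b = s⁻¹ * (s * b) := (inv_mul_cancel_left s b).symm
        rw [this]
        exact mul_mem (inv_mem (hall i0)) hsbG
  refine ⟨hbase, le_antisymm hle ?_⟩
  intro g hg
  obtain ⟨τ, hτ⟩ := hg
  obtain ⟨h, hhG, hh⟩ := hsurj τ
  have hhinv : ∀ q : Fin n × Fin 2, (h⁻¹ q).1 = τ⁻¹ q.1 := by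
    intro q
    have := hh (h⁻¹ q)
    rw [show h (h⁻¹ q) = q from h.apply_symm_apply q] at this
    rw [this, show τ⁻¹ (τ (h⁻¹ q).1) = (h⁻¹ q).1 from τ.symm_apply_apply _]
  have hmem : h⁻¹ * g ∈ baseSubgroup n := by
    intro p
    rw [Equiv.Perm.mul_apply, hhinv, hτ, show τ⁻¹ (τ p.1) = p.1 from τ.symm_apply_apply _]
  have : g = h * (h⁻¹ * g) := (mul_inv_cancel_left h g).symm
  rw [this]
  exact mul_mem hhG (hbase hmem)
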